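/- Let p and p* be real numbers and n ≥ 0, and let Φ_n(x) = ∑_{k=0}^{n} C(n,k) (p*)_{n−k} · k! · L_k^{(−p−1)}(x) · e^{−x/2}. Then for every s ∈ ℂ with Re s > 0, the integral ∫₀^∞ Φ_n(2πx²) x^{s−1} dx converges and equals (1/2) · q_n(s/2) · π^{−s/2} · Γ(s/2), where Γ is the Gamma function. -/

import Mathlib

open MeasureTheory Real Set

/-- `qpoly p ps n s` is `n!` times the `n`-th Taylor coefficient at `z = 0` of
`z ↦ (1 - z)^(p+s) * (1 + z)^(ps - s)` (principal branch powers). -/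
noncomputable def qpoly (p ps : ℝ) (n : ℕ) (s : ℂ) : ℂ :=
  iteratedDeriv n (fun z : ℂ => (1 - z) ^ ((p : ℂ) + s) * (1 + z) ^ ((ps : ℂ) - s)) 0

/-- Generalized binomial coefficient `C(w, m) = w(w-1)⋯(w-m+1)/m!` over the reals. -/
noncomputable def genBinomR (w : ℝ) (m : ℕ) : ℝ :=
  (∏ j ∈ Finset.range m, (w - j)) / (m.factorial : ℝ)

/-- The generalized Laguerre polynomial
`L_k^{(α)}(x) = ∑_{j=0}^k ((-1)^j / j!) C(k+α, k-j) x^j`. -/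
noncomputable def laguerre (α : ℝ) (k : ℕ) (x : ℝ) : ℝ :=
  ∑ j ∈ Finset.range (k + 1),
    ((-1 : ℝ) ^ j / (j.factorial : ℝ)) * genBinomR ((k : ℝ) + α) (k - j) * x ^ j

/-- The falling factorial `(x)_m = x(x-1)⋯(x-m+1)`, with `(x)_0 = 1`. -/
noncomputable def fallingFac (x : ℝ) (m : ℕ) : ℝ :=
  ∏ j ∈ Finset.range m, (x - j)

/-- `Φ_n(x) = ∑_{k=0}^n C(n,k) (p*)_{n-k} k! L_k^{(-p-1)}(x) e^{-x/2}`. -/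
noncomputable def PhiFun (p ps : ℝ) (n : ℕ) (x : ℝ) : ℝ :=
  ∑ k ∈ Finset.range (n + 1),
    (n.choose k : ℝ) * fallingFac ps (n - k) * (k.factorial : ℝ) *
      laguerre (-p - 1) k x * Real.exp (-x / 2)


namespace MellinAux

/-- complex falling factorial -/
noncomputable def ffC (x : ℂ) (m : ℕ) : ℂ := ∏ j ∈ Finset.range m, (x - j)

@[simp] lemma ffC_zero (x : ℂ) : ffC x 0 = 1 := by simp [ffC]

lemma ffC_succ (x : ℂ) (m : ℕ) : ffC x (m+1) = ffC x m * (x - m) := by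
  simp [ffC, Finset.prod_range_succ]

lemma ffC_add (x : ℂ) (m l : ℕ) : ffC x (m + l) = ffC x m * ffC (x - m) l := by
  rw [ffC, Finset.prod_range_add]
  congr 1
  refine Finset.prod_congr rfl fun i _ => ?_
  push_cast; ring

/-- Vandermonde for falling factorials. -/
lemma ffC_vandermonde (x y : ℂ) (m : ℕ) :
    ffC (x + y) m
      = ∑ i ∈ Finset.range (m+1), (m.choose i : ℂ) * ffC x i * ffC y (m - i) := by
  induction m with
  | zero => simp
  | succ m ih =>
    have h1 : ffC (x + y) (m+1) = ffC (x + y) m * (x + y - m) := ffC_succ _ _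
    rw [h1, ih, Finset.sum_mul]
    have h2 : ∀ i ∈ Finset.range (m+1),
        (m.choose i : ℂ) * ffC x i * ffC y (m - i) * (x + y - m)
        = (m.choose i : ℂ) * ffC x (i+1) * ffC y (m - i)
          + (m.choose i : ℂ) * ffC x i * ffC y (m - i + 1) := by
      intro i hi
      rw [Finset.mem_range] at hi
      have hi' : i ≤ m := Nat.lt_succ_iff.mp hi
      have hcast : ((m - i : ℕ) : ℂ) = (m : ℂ) - i := by
        push_cast [Nat.cast_sub hi']; ring
      rw [ffC_succ x i, ffC_succ y (m - i), hcast]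
      ring
    rw [Finset.sum_congr rfl h2, Finset.sum_add_distrib]
    -- now reassemble to the m+1 sum
    have key : ∑ i ∈ Finset.range (m+2), ((m+1).choose i : ℂ) * ffC x i * ffC y (m+1-i)
        = (∑ i ∈ Finset.range (m+1), (m.choose i : ℂ) * ffC x (i+1) * ffC y (m - i))
          + ∑ i ∈ Finset.range (m+1), (m.choose i : ℂ) * ffC x i * ffC y (m - i + 1) := by
      rw [Finset.sum_range_succ' (fun i => ((m+1).choose i : ℂ) * ffC x i * ffC y (m+1-i)) (m+1)]
      have h3 : ∀ i ∈ Finset.range (m+1),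
          ((m+1).choose (i+1) : ℂ) * ffC x (i+1) * ffC y (m+1-(i+1))
          = (m.choose i : ℂ) * ffC x (i+1) * ffC y (m - i)
            + (m.choose (i+1) : ℂ) * ffC x (i+1) * ffC y (m - i) := by
        intro i hi
        have : (m+1).choose (i+1) = m.choose i + m.choose (i+1) := Nat.choose_succ_succ m i
        rw [this]
        push_cast
        ring
      rw [Finset.sum_congr rfl h3, Finset.sum_add_distrib]
      have h4 : (∑ i ∈ Finset.range (m+1), (m.choose (i+1) : ℂ) * ffC x (i+1) * ffC y (m - i))
          + ((m+1).choose 0 : ℂ) * ffC x 0 * ffC y (m+1-0)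
          = ∑ i ∈ Finset.range (m+1), (m.choose i : ℂ) * ffC x i * ffC y (m - i + 1) := by
        have h5 : ∑ i ∈ Finset.range (m+2), (m.choose i : ℂ) * ffC x i * ffC y (m + 1 - i)
            = (∑ i ∈ Finset.range (m+1), (m.choose (i+1) : ℂ) * ffC x (i+1) * ffC y (m - i))
              + ((m+1).choose 0 : ℂ) * ffC x 0 * ffC y (m+1-0) := by
          rw [Finset.sum_range_succ' (fun i => (m.choose i : ℂ) * ffC x i * ffC y (m+1-i)) (m+1)]
          simp only [Nat.choose_zero_right]
          congr 1
          refine Finset.sum_congr rfl fun i hi => ?_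
          have : m + 1 - (i + 1) = m - i := by omega
          rw [this]
        rw [← h5, Finset.sum_range_succ]
        simp only [Nat.choose_succ_self, Nat.cast_zero, zero_mul, mul_zero, add_zero, zero_mul]
        refine Finset.sum_congr rfl fun i hi => ?_
        rw [Finset.mem_range] at hi
        have : m + 1 - i = m - i + 1 := by omega
        rw [this]
      rw [add_assoc, h4]
    rw [key]

/-- Reflection: `ffC (c - x) a = (-1)^a ffC (x - c + a - 1) a`. -/
lemma ffC_reflect (c x : ℂ) (a : ℕ) :
    ffC (c - x) a = (-1 : ℂ)^a * ffC (x - c + a - 1) a := by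
  rw [ffC, ffC]
  have h1 : ∀ j ∈ Finset.range a, c - x - (j:ℂ) = (-1) * (x - c + j) := by
    intro j hj; ring
  rw [Finset.prod_congr rfl h1, Finset.prod_mul_distrib, Finset.prod_const, Finset.card_range]
  congr 1
  rw [← Finset.prod_range_reflect (fun j => (x - c + (a:ℂ) - 1 - j)) a]
  refine Finset.prod_congr rfl fun j hj => ?_
  rw [Finset.mem_range] at hj
  have h2 : ((a - 1 - j : ℕ) : ℂ) = (a : ℂ) - 1 - j := by
    have h3 : a - 1 - j = a - (1 + j) := by omega
    rw [h3]
    push_cast [Nat.cast_sub (by omega : 1 + j ≤ a)]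
    ring
  rw [h2]
  ring


lemma sum_choose_mul_choose (k b : ℕ) (hb : b ≤ k) :
    ∑ a ∈ Finset.range (k+1), k.choose a * a.choose b = k.choose b * 2^(k-b) := by
  have hsub : Finset.Ico b (k+1) ⊆ Finset.range (k+1) := by
    intro a ha; rw [Finset.mem_range]; exact (Finset.mem_Ico.mp ha).2
  rw [← Finset.sum_subset hsub (fun a ha hnot => by
    have : a < b := by
      rw [Finset.mem_range] at ha; rw [Finset.mem_Ico] at hnot; omega
    rw [Nat.choose_eq_zero_of_lt this, mul_zero])]
  rw [Finset.sum_Ico_eq_sum_range]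
  have h1 : ∀ i ∈ Finset.range (k + 1 - b), k.choose (b + i) * (b + i).choose b
      = k.choose b * (k - b).choose i := by
    intro i hi
    rw [Finset.mem_range] at hi
    have hik : b + i ≤ k := by omega
    rw [Nat.choose_mul (n := k) (Nat.le_add_right b i)]
    congr 2
    omega
  rw [Finset.sum_congr rfl h1, ← Finset.mul_sum]
  congr 1
  have : k + 1 - b = (k - b) + 1 := by omega
  rw [this, Nat.sum_range_choose]



lemma star (k : ℕ) (q σ : ℂ) :
    ∑ a ∈ Finset.range (k+1), (k.choose a : ℂ) * (-1)^a * ffC (q + σ) a * ffC (-σ) (k-a)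
      = ∑ j ∈ Finset.range (k+1),
          (k.choose j : ℂ) * 2^j * ffC ((k:ℂ) - q - 1) (k-j) * ffC (-σ) j := by
  set K : ℂ := (k:ℂ) - q - 1 with hK
  have step1 : ∀ a ∈ Finset.range (k+1),
      (k.choose a : ℂ) * (-1)^a * ffC (q + σ) a * ffC (-σ) (k-a)
        = ∑ b ∈ Finset.range (k+1),
            ((k.choose a : ℂ) * (a.choose b : ℂ)) * (ffC K b * ffC (-σ) (k-b)) := by
    intro a ha
    rw [Finset.mem_range] at ha
    have ha' : a ≤ k := by omega
    have hrefl : ffC (q + σ) a = (-1:ℂ)^a * ffC (-σ - q + a - 1) a := by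
      have := ffC_reflect q (-σ) a
      simpa [sub_neg_eq_add] using this
    have hv : ffC (-σ - q + a - 1) a
        = ∑ i ∈ Finset.range (a+1),
            (a.choose i : ℂ) * ffC (-σ - ((k-a : ℕ):ℂ)) i * ffC K (a - i) := by
      have hc : ((k - a : ℕ) : ℂ) = (k:ℂ) - a := by
        push_cast [Nat.cast_sub ha']; ring
      have harg : -σ - q + (a:ℂ) - 1 = (-σ - ((k-a:ℕ):ℂ)) + K := by
        rw [hc, hK]; ring
      rw [harg, ffC_vandermonde]
    have hsq : ((-1:ℂ))^a * (-1:ℂ)^a = 1 := by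
      rw [← pow_add]; exact Even.neg_one_pow ⟨a, rfl⟩
    have hA : (k.choose a : ℂ) * (-1)^a * ffC (q + σ) a * ffC (-σ) (k-a)
        = ∑ i ∈ Finset.range (a+1),
            ((k.choose a : ℂ) * (a.choose i : ℂ)) *
              (ffC K (a-i) * ffC (-σ) ((k-a) + i)) := by
      rw [hrefl, hv, Finset.mul_sum, Finset.mul_sum, Finset.sum_mul]
      refine Finset.sum_congr rfl fun i hi => ?_
      rw [ffC_add (-σ) (k-a) i]
      linear_combination ((k.choose a : ℂ) * (a.choose i : ℂ) * ffC (-σ - ((k-a:ℕ):ℂ)) i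
        * ffC K (a-i) * ffC (-σ) (k-a)) * hsq
    have hB : ∑ i ∈ Finset.range (a+1),
            ((k.choose a : ℂ) * (a.choose i : ℂ)) *
              (ffC K (a-i) * ffC (-σ) ((k-a) + i))
        = ∑ b ∈ Finset.range (a+1),
            ((k.choose a : ℂ) * (a.choose b : ℂ)) * (ffC K b * ffC (-σ) (k-b)) := by
      rw [← Finset.sum_range_reflect
        (fun i => ((k.choose a : ℂ) * (a.choose i : ℂ)) *
              (ffC K (a-i) * ffC (-σ) ((k-a) + i))) (a+1)]
      refine Finset.sum_congr rfl fun b hb => ?_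
      rw [Finset.mem_range] at hb
      have hb' : b ≤ a := by omega
      have e1 : a + 1 - 1 - b = a - b := by omega
      have e2 : a - (a - b) = b := by omega
      have e3 : (k - a) + (a - b) = k - b := by omega
      have e4 : a.choose (a - b) = a.choose b := Nat.choose_symm hb'
      rw [e1, e2, e3, e4]
    rw [hA, hB]
    refine Finset.sum_subset (by
      intro b hbmem
      rw [Finset.mem_range] at hbmem ⊢
      omega) (fun b hbk hbnot => ?_)
    rw [Finset.mem_range] at hbk hbnot
    have : a < b := by omega
    rw [Nat.choose_eq_zero_of_lt this]
    simp
  rw [Finset.sum_congr rfl step1, Finset.sum_comm]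
  have hL : ∀ b ∈ Finset.range (k+1), ∑ a ∈ Finset.range (k+1),
      ((k.choose a : ℂ) * (a.choose b : ℂ)) * (ffC K b * ffC (-σ) (k-b))
      = ((k.choose b * 2^(k-b) : ℕ) : ℂ) * (ffC K b * ffC (-σ) (k-b)) := by
    intro b hb
    rw [Finset.mem_range] at hb
    have hb' : b ≤ k := by omega
    rw [← Finset.sum_mul]
    congr 1
    rw [← sum_choose_mul_choose k b hb']
    push_cast
    rfl
  rw [Finset.sum_congr rfl hL,
    ← Finset.sum_range_reflect
      (fun b => ((k.choose b * 2^(k-b) : ℕ) : ℂ) * (ffC K b * ffC (-σ) (k-b))) (k+1)]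
  refine Finset.sum_congr rfl fun j hj => ?_
  rw [Finset.mem_range] at hj
  have hj' : j ≤ k := by omega
  have e1 : k + 1 - 1 - j = k - j := by omega
  have e2 : k - (k - j) = j := by omega
  rw [e1, e2, Nat.choose_symm hj']
  push_cast
  ring

lemma key (n : ℕ) (q ρ σ : ℂ) :
    ∑ k ∈ Finset.range (n+1), (n.choose k : ℂ) * ffC ρ (n-k) *
        (∑ j ∈ Finset.range (k+1),
          (k.choose j : ℂ) * 2^j * ffC ((k:ℂ) - q - 1) (k-j) * ffC (-σ) j)
      = ∑ k ∈ Finset.range (n+1),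
          (n.choose k : ℂ) * (-1)^k * ffC (q + σ) k * ffC (ρ - σ) (n-k) := by
  have h1 : ∀ k ∈ Finset.range (n+1),
      (n.choose k : ℂ) * ffC ρ (n-k) *
        (∑ j ∈ Finset.range (k+1),
          (k.choose j : ℂ) * 2^j * ffC ((k:ℂ) - q - 1) (k-j) * ffC (-σ) j)
      = ∑ a ∈ Finset.range (n+1),
          ((n.choose k : ℂ) * (k.choose a : ℂ)) *
            ((-1)^a * ffC (q + σ) a * ffC ρ (n-k) * ffC (-σ) (k-a)) := by
    intro k hk
    rw [Finset.mem_range] at hk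
    rw [← star k q σ, Finset.mul_sum]
    have hext : ∑ a ∈ Finset.range (k+1),
        (n.choose k : ℂ) * ffC ρ (n-k) *
          ((k.choose a : ℂ) * (-1)^a * ffC (q + σ) a * ffC (-σ) (k-a))
        = ∑ a ∈ Finset.range (n+1),
        (n.choose k : ℂ) * ffC ρ (n-k) *
          ((k.choose a : ℂ) * (-1)^a * ffC (q + σ) a * ffC (-σ) (k-a)) := by
      refine Finset.sum_subset (by
        intro b hb
        rw [Finset.mem_range] at hb ⊢
        omega) (fun b hb hbnot => ?_)
      rw [Finset.mem_range] at hb hbnot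
      rw [Nat.choose_eq_zero_of_lt (by omega : k < b)]
      simp
    rw [hext]
    exact Finset.sum_congr rfl fun a _ => by ring
  rw [Finset.sum_congr rfl h1, Finset.sum_comm]
  refine Finset.sum_congr rfl fun a ha => ?_
  rw [Finset.mem_range] at ha
  have ha' : a ≤ n := by omega
  -- inner sum over k
  have hIco : ∑ k ∈ Finset.range (n+1),
      ((n.choose k : ℂ) * (k.choose a : ℂ)) *
        ((-1)^a * ffC (q + σ) a * ffC ρ (n-k) * ffC (-σ) (k-a))
      = ∑ k ∈ Finset.Ico a (n+1),
      ((n.choose k : ℂ) * (k.choose a : ℂ)) *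
        ((-1)^a * ffC (q + σ) a * ffC ρ (n-k) * ffC (-σ) (k-a)) := by
    refine (Finset.sum_subset (by
      intro b hb
      rw [Finset.mem_Ico] at hb
      rw [Finset.mem_range]
      omega) (fun b hb hbnot => ?_)).symm
    rw [Finset.mem_range] at hb
    rw [Finset.mem_Ico] at hbnot
    rw [Nat.choose_eq_zero_of_lt (by omega : b < a)]
    simp
  rw [hIco, Finset.sum_Ico_eq_sum_range]
  have h3 : ∀ m ∈ Finset.range (n+1-a),
      ((n.choose (a+m) : ℂ) * ((a+m).choose a : ℂ)) *
        ((-1)^a * ffC (q + σ) a * ffC ρ (n-(a+m)) * ffC (-σ) ((a+m)-a))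
      = ((n.choose a : ℂ) * (-1)^a * ffC (q + σ) a) *
          (((n-a).choose m : ℂ) * ffC (-σ) m * ffC ρ ((n-a) - m)) := by
    intro m hm
    rw [Finset.mem_range] at hm
    have hmn : a + m ≤ n := by omega
    have hch : n.choose (a+m) * (a+m).choose a = n.choose a * (n-a).choose m := by
      rw [Nat.choose_mul (n := n) (Nat.le_add_right a m)]
      congr 2
      omega
    have e1 : n - (a+m) = (n-a) - m := by omega
    have e2 : (a+m) - a = m := by omega
    rw [e1, e2]
    have hc2 := congrArg (fun t : ℕ => (t : ℂ)) hch
    push_cast at hc2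
    linear_combination ((-1:ℂ)^a * ffC (q + σ) a * ffC ρ (n-a-m) * ffC (-σ) m) * hc2
  rw [Finset.sum_congr rfl h3, ← Finset.mul_sum]
  have e3 : n + 1 - a = (n - a) + 1 := by omega
  rw [e3]
  have hv := ffC_vandermonde (-σ) ρ (n-a)
  rw [show (-σ) + ρ = ρ - σ by ring] at hv
  rw [← hv]

lemma pascal_sum (n : ℕ) (t : ℕ → ℂ) :
    ∑ k ∈ Finset.range (n+2), ((n+1).choose k : ℂ) * t k
      = ∑ k ∈ Finset.range (n+1), (n.choose k : ℂ) * (t k + t (k+1)) := by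
  rw [Finset.sum_range_succ' (fun k => ((n+1).choose k : ℂ) * t k) (n+1)]
  have h1 : ∀ k ∈ Finset.range (n+1),
      ((n+1).choose (k+1) : ℂ) * t (k+1)
        = (n.choose k : ℂ) * t (k+1) + (n.choose (k+1) : ℂ) * t (k+1) := by
    intro k _
    rw [Nat.choose_succ_succ n k]
    push_cast
    ring
  rw [Finset.sum_congr rfl h1, Finset.sum_add_distrib]
  have h2 : (∑ k ∈ Finset.range (n+1), (n.choose (k+1) : ℂ) * t (k+1))
      + ((n+1).choose 0 : ℂ) * t 0 = ∑ k ∈ Finset.range (n+1), (n.choose k : ℂ) * t k := by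
    have h3 : ∑ k ∈ Finset.range (n+2), (n.choose k : ℂ) * t k
        = (∑ k ∈ Finset.range (n+1), (n.choose (k+1) : ℂ) * t (k+1))
          + ((n+1).choose 0 : ℂ) * t 0 := by
      rw [Finset.sum_range_succ' (fun k => (n.choose k : ℂ) * t k) (n+1)]
      simp
    rw [← h3, Finset.sum_range_succ, Nat.choose_succ_self]
    simp
  rw [add_assoc, h2, Finset.sum_congr rfl (fun k _ => by ring : ∀ k ∈ Finset.range (n+1),
    (n.choose k : ℂ) * (t k + t (k+1)) = (n.choose k : ℂ) * t k + (n.choose k : ℂ) * t (k+1)),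
    Finset.sum_add_distrib]
  ring

lemma hasDerivAt_cpow_one_sub {c : ℂ} {z : ℂ} (hz : 0 < (1 - z).re) :
    HasDerivAt (fun w : ℂ => (1 - w) ^ c) (c * (1 - z) ^ (c - 1) * (-1)) z := by
  have h1 : HasDerivAt (fun w : ℂ => 1 - w) (-1) z := by
    simpa using (hasDerivAt_id z).const_sub 1
  exact h1.cpow_const (Or.inl hz)

lemma hasDerivAt_cpow_one_add {c : ℂ} {z : ℂ} (hz : 0 < (1 + z).re) :
    HasDerivAt (fun w : ℂ => (1 + w) ^ c) (c * (1 + z) ^ (c - 1) * 1) z := by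
  have h1 : HasDerivAt (fun w : ℂ => 1 + w) 1 z := by
    simpa using (hasDerivAt_id z).const_add 1
  exact h1.cpow_const (Or.inl hz)

lemma re_pos_one_sub {z : ℂ} (hz : z ∈ Metric.ball (0:ℂ) 1) : 0 < (1 - z).re := by
  have habs : ‖z‖ < 1 := by
    rwa [Metric.mem_ball, dist_zero_right] at hz
  simp only [Complex.sub_re, Complex.one_re]
  linarith [(abs_le.mp (Complex.abs_re_le_norm z)).2]

lemma re_pos_one_add {z : ℂ} (hz : z ∈ Metric.ball (0:ℂ) 1) : 0 < (1 + z).re := by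
  have habs : ‖z‖ < 1 := by
    rwa [Metric.mem_ball, dist_zero_right] at hz
  simp only [Complex.add_re, Complex.one_re]
  linarith [(abs_le.mp (Complex.abs_re_le_norm z)).1]

lemma iter_main (a b : ℂ) (n : ℕ) :
    Set.EqOn (iteratedDeriv n (fun z : ℂ => (1 - z) ^ a * (1 + z) ^ b))
      (fun z => ∑ k ∈ Finset.range (n+1),
        (n.choose k : ℂ) * (-1)^k * ffC a k * ffC b (n-k) *
          ((1 - z) ^ (a - (k:ℂ)) * (1 + z) ^ (b - ((n-k : ℕ) : ℂ))))
      (Metric.ball (0:ℂ) 1) := by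
  induction n with
  | zero =>
    intro z _
    simp [iteratedDeriv_zero]
  | succ n ih =>
    intro z hz
    have hz1 : 0 < (1 - z).re := re_pos_one_sub hz
    have hz2 : 0 < (1 + z).re := re_pos_one_add hz
    rw [iteratedDeriv_succ]
    have hev := ih.eventuallyEq_of_mem (Metric.isOpen_ball.mem_nhds hz)
    rw [hev.deriv_eq]
    have hd : HasDerivAt (fun w : ℂ => ∑ k ∈ Finset.range (n+1),
        (n.choose k : ℂ) * (-1)^k * ffC a k * ffC b (n-k) *
          ((1 - w) ^ (a - (k:ℂ)) * (1 + w) ^ (b - ((n-k : ℕ) : ℂ))))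
        (∑ k ∈ Finset.range (n+1),
          (n.choose k : ℂ) * (-1)^k * ffC a k * ffC b (n-k) *
            (((a - (k:ℂ)) * (1 - z) ^ (a - (k:ℂ) - 1) * (-1)) * (1 + z) ^ (b - ((n-k : ℕ) : ℂ))
              + (1 - z) ^ (a - (k:ℂ)) *
                ((b - ((n-k : ℕ) : ℂ)) * (1 + z) ^ (b - ((n-k : ℕ) : ℂ) - 1) * 1))) z := by
      refine HasDerivAt.fun_sum fun k _ => ?_
      exact ((hasDerivAt_cpow_one_sub hz1).mul (hasDerivAt_cpow_one_add hz2)).const_mul _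
    rw [hd.deriv]
    show _ = ∑ k ∈ Finset.range (n+1+1),
        ((n+1).choose k : ℂ) * (-1)^k * ffC a k * ffC b (n+1-k) *
          ((1 - z) ^ (a - (k:ℂ)) * (1 + z) ^ (b - ((n+1-k : ℕ) : ℂ)))
    rw [show n+1+1 = n+2 from rfl]
    set t : ℕ → ℂ := fun j => (-1)^j * ffC a j * ffC b (n+1-j) *
      ((1 - z) ^ (a - (j:ℂ)) * (1 + z) ^ (b - ((n+1-j : ℕ) : ℂ))) with ht
    have htarget : ∑ k ∈ Finset.range (n+2),
        ((n+1).choose k : ℂ) * (-1)^k * ffC a k * ffC b (n+1-k) *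
          ((1 - z) ^ (a - (k:ℂ)) * (1 + z) ^ (b - ((n+1-k : ℕ) : ℂ)))
        = ∑ k ∈ Finset.range (n+2), ((n+1).choose k : ℂ) * t k := by
      refine Finset.sum_congr rfl fun k _ => ?_
      rw [ht]
      ring
    rw [htarget, pascal_sum n t]
    refine Finset.sum_congr rfl fun k hk => ?_
    rw [Finset.mem_range] at hk
    have hk' : k ≤ n := by omega
    have e1 : n + 1 - k = (n - k) + 1 := by omega
    have e2 : n + 1 - (k + 1) = n - k := by omega
    have ec1 : ((k + 1 : ℕ) : ℂ) = (k : ℂ) + 1 := by push_cast; ring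
    have ec2 : (((n - k) + 1 : ℕ) : ℂ) = ((n - k : ℕ) : ℂ) + 1 := by push_cast; ring
    rw [ht]
    simp only [e1, e2, ec1, ec2, ffC_succ]
    rw [show a - ((k:ℂ) + 1) = a - (k:ℂ) - 1 by ring,
      show b - (((n - k : ℕ) : ℂ) + 1) = b - ((n - k : ℕ) : ℂ) - 1 by ring]
    rw [pow_succ]
    ring

lemma qpoly_eq (p ps : ℝ) (n : ℕ) (σ : ℂ) :
    qpoly p ps n σ = ∑ k ∈ Finset.range (n+1),
      (n.choose k : ℂ) * (-1)^k * ffC ((p:ℂ) + σ) k * ffC ((ps:ℂ) - σ) (n-k) := by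
  have h0 : (0:ℂ) ∈ Metric.ball (0:ℂ) 1 := by simp
  have := iter_main ((p:ℂ) + σ) ((ps:ℂ) - σ) n h0
  rw [qpoly, this]
  refine Finset.sum_congr rfl fun k _ => ?_
  simp [Complex.one_cpow]

lemma Gamma_add_nat {σ : ℂ} (hσ : 0 < σ.re) (j : ℕ) :
    Complex.Gamma (σ + j) = Complex.Gamma σ * ∏ i ∈ Finset.range j, (σ + i) := by
  induction j with
  | zero => simp
  | succ j ih =>
    have hne : σ + (j:ℂ) ≠ 0 := by
      intro h
      have : (σ + (j:ℂ)).re = 0 := by rw [h]; simp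
      rw [Complex.add_re, Complex.natCast_re] at this
      have : (0:ℝ) ≤ (j:ℝ) := Nat.cast_nonneg j
      linarith [Nat.cast_nonneg (α := ℝ) j,
        show σ.re + (j:ℝ) = 0 by
          have h2 : (σ + (j:ℂ)).re = 0 := by rw [h]; simp
          rwa [Complex.add_re, Complex.natCast_re] at h2]
    have harg : σ + ((j+1 : ℕ) : ℂ) = (σ + j) + 1 := by push_cast; ring
    rw [harg, Complex.Gamma_add_one _ hne, ih, Finset.prod_range_succ]
    ring

lemma mellinConvergent_congr {f g : ℝ → ℂ} {s : ℂ} (h : EqOn f g (Ioi 0)) :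
    MellinConvergent f s ↔ MellinConvergent g s := by
  refine integrableOn_congr_fun (fun t ht => ?_) measurableSet_Ioi
  rw [h ht]

lemma mellin_congr {f g : ℝ → ℂ} {s : ℂ} (h : EqOn f g (Ioi 0)) :
    mellin f s = mellin g s := by
  refine setIntegral_congr_fun measurableSet_Ioi fun t ht => ?_
  rw [h ht]

lemma hasMellin_exp {w : ℂ} (hw : 0 < w.re) :
    MellinConvergent (fun t : ℝ => ((Real.exp (-t) : ℝ) : ℂ)) w ∧
      mellin (fun t : ℝ => ((Real.exp (-t) : ℝ) : ℂ)) w = Complex.Gamma w := by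
  constructor
  · refine (Complex.GammaIntegral_convergent hw).congr_fun (fun t ht => ?_) measurableSet_Ioi
    simp only [smul_eq_mul]
    ring
  · rw [Complex.Gamma_eq_integral hw, Complex.GammaIntegral, mellin]
    refine setIntegral_congr_fun measurableSet_Ioi fun t ht => ?_
    simp only [smul_eq_mul]
    ring

lemma hasMellin_pow_exp (j : ℕ) {w : ℂ} (hw : 0 < w.re) :
    MellinConvergent (fun t : ℝ => (t:ℂ)^(j:ℂ) • ((Real.exp (-t) : ℝ) : ℂ)) w ∧
      mellin (fun t : ℝ => (t:ℂ)^(j:ℂ) • ((Real.exp (-t) : ℝ) : ℂ)) w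
        = Complex.Gamma (w + j) := by
  have hwj : 0 < (w + (j:ℂ)).re := by
    rw [Complex.add_re, Complex.natCast_re]
    have : (0:ℝ) ≤ (j:ℝ) := Nat.cast_nonneg j
    linarith
  constructor
  · exact MellinConvergent.cpow_smul.mpr (hasMellin_exp hwj).1
  · rw [mellin_cpow_smul]
    exact (hasMellin_exp hwj).2

lemma re_half {s : ℂ} (hs : 0 < s.re) : 0 < (s / 2).re := by
  rw [show (2:ℂ) = ((2:ℝ):ℂ) by norm_num, Complex.div_ofReal_re]
  linarith

lemma hasMellin_gauss (j : ℕ) {s : ℂ} (hs : 0 < s.re) :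
    MellinConvergent (fun x : ℝ => (((2*π*x^2:ℝ)^j * Real.exp (-(π*x^2)) : ℝ) : ℂ)) s ∧
      mellin (fun x : ℝ => (((2*π*x^2:ℝ)^j * Real.exp (-(π*x^2)) : ℝ) : ℂ)) s
        = 2^j * ((1/2) * (π:ℂ)^(-s/2) * Complex.Gamma (s/2 + j)) := by
  set g1 : ℝ → ℂ := fun t => (t:ℂ)^(j:ℂ) • ((Real.exp (-t) : ℝ) : ℂ) with hg1
  have hEq : EqOn (fun x : ℝ => (((2*π*x^2:ℝ)^j * Real.exp (-(π*x^2)) : ℝ) : ℂ))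
      (fun x : ℝ => (2:ℂ)^j • g1 (π * x ^ (2:ℝ))) (Ioi 0) := by
    intro x hx
    have hx' : (0:ℝ) < x := hx
    have hx2 : x ^ (2:ℝ) = x ^ 2 := by
      rw [show (2:ℝ) = ((2:ℕ):ℝ) by norm_num, Real.rpow_natCast]
    simp only [hg1, hx2, smul_eq_mul]
    rw [Complex.cpow_natCast]
    push_cast
    ring
  have hconv1 : MellinConvergent g1 (s/2) := (hasMellin_pow_exp j (re_half hs)).1
  have hconv2 : MellinConvergent (fun x : ℝ => g1 (π * x)) (s/2) :=
    (MellinConvergent.comp_mul_left pi_pos).mpr hconv1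
  have hconv3 : MellinConvergent (fun x : ℝ => g1 (π * x ^ (2:ℝ))) s := by
    have h2 : (2:ℝ) ≠ 0 := two_ne_zero
    exact (MellinConvergent.comp_rpow (f := fun x : ℝ => g1 (π * x)) h2).mpr hconv2
  constructor
  · rw [mellinConvergent_congr hEq]
    exact hconv3.const_smul ((2:ℂ)^j)
  · have hcast : s / ((2:ℝ):ℂ) = s / 2 := by norm_num
    have hre2 : 0 < (s / ((2:ℝ):ℂ)).re := by rw [hcast]; exact re_half hs
    rw [mellin_congr hEq, mellin_const_smul,
      mellin_comp_rpow (fun x : ℝ => g1 (π * x)) s (2:ℝ),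
      mellin_comp_mul_left g1 (s / ((2:ℝ):ℂ)) pi_pos,
      (hasMellin_pow_exp j hre2).2, hcast]
    simp only [smul_eq_mul]
    rw [show |(2:ℝ)|⁻¹ = ((1:ℝ)/2) by norm_num, Complex.real_smul]
    push_cast
    rw [neg_div]
    ring

lemma fallingFac_cast (x : ℝ) (m : ℕ) : ((fallingFac x m : ℝ) : ℂ) = ffC (x:ℂ) m := by
  rw [fallingFac, ffC]
  push_cast
  rfl

lemma genBinomR_cast (w : ℝ) (m : ℕ) :
    ((genBinomR w m : ℝ) : ℂ) = ffC (w:ℂ) m / (m.factorial : ℂ) := by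
  rw [genBinomR, ffC]
  push_cast
  rfl

lemma ffC_neg_prod (σ : ℂ) (j : ℕ) :
    ∏ i ∈ Finset.range j, (σ + i) = (-1)^j * ffC (-σ) j := by
  have h1 : ffC (-σ) j = (-1)^j * ∏ i ∈ Finset.range j, (σ + i) := by
    rw [ffC]
    calc ∏ i ∈ Finset.range j, (-σ - (i:ℂ))
        = ∏ i ∈ Finset.range j, (-1) * (σ + (i:ℂ)) :=
          Finset.prod_congr rfl (fun i _ => by ring)
      _ = (-1)^j * ∏ i ∈ Finset.range j, (σ + (i:ℂ)) := by
          rw [Finset.prod_mul_distrib, Finset.prod_const, Finset.card_range]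
  rw [h1, ← mul_assoc, ← pow_add]
  rw [Even.neg_one_pow ⟨j, rfl⟩, one_mul]

end MellinAux

open MellinAux

theorem mellin_PhiFun_sq (p ps : ℝ) (n : ℕ) (s : ℂ) (hs : 0 < s.re) :
    IntegrableOn (fun x : ℝ => (PhiFun p ps n (2 * π * x ^ 2) : ℂ) * (x : ℂ) ^ (s - 1))
      (Ioi (0 : ℝ)) ∧
    ∫ x in Ioi (0 : ℝ), (PhiFun p ps n (2 * π * x ^ 2) : ℂ) * (x : ℂ) ^ (s - 1) =
      (1 / 2) * qpoly p ps n (s / 2) * (π : ℂ) ^ (-s / 2) * Complex.Gamma (s / 2) := by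
  set σ : ℂ := s / 2 with hσdef
  have hσ : 0 < σ.re := re_half hs
  set c : ℕ → ℕ → ℝ := fun k j => (n.choose k : ℝ) * fallingFac ps (n - k) *
    (k.factorial : ℝ) * ((-1:ℝ)^j / (j.factorial : ℝ)) *
    genBinomR ((k:ℝ) + (-p - 1)) (k - j) with hc
  set g : ℕ → ℝ → ℂ := fun j x => (((2*π*x^2:ℝ)^j * Real.exp (-(π*x^2)) : ℝ) : ℂ) with hg
  have hpointR : ∀ x : ℝ, PhiFun p ps n (2*π*x^2)
      = ∑ k ∈ Finset.range (n+1), ∑ j ∈ Finset.range (k+1),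
          c k j * ((2*π*x^2)^j * Real.exp (-(π*x^2))) := by
    intro x
    rw [PhiFun]
    refine Finset.sum_congr rfl fun k _ => ?_
    rw [laguerre, Finset.mul_sum, Finset.sum_mul]
    refine Finset.sum_congr rfl fun j _ => ?_
    rw [show -(2*π*x^2)/2 = -(π*x^2) by ring, hc]
    ring
  have hfun : (fun x : ℝ => (PhiFun p ps n (2 * π * x ^ 2) : ℂ) * (x : ℂ) ^ (s - 1))
      = fun x : ℝ => ∑ k ∈ Finset.range (n+1), ∑ j ∈ Finset.range (k+1),
          (c k j : ℂ) * ((x:ℂ)^(s-1) • g j x) := by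
    funext x
    rw [hpointR x]
    push_cast
    rw [Finset.sum_mul]
    refine Finset.sum_congr rfl fun k _ => ?_
    rw [Finset.sum_mul]
    refine Finset.sum_congr rfl fun j _ => ?_
    simp only [hg, smul_eq_mul]
    push_cast
    ring
  have hterm_int : ∀ k j : ℕ, IntegrableOn
      (fun x : ℝ => (c k j : ℂ) * ((x:ℂ)^(s-1) • g j x)) (Ioi 0) := by
    intro k j
    exact ((hasMellin_gauss j hs).1).const_mul _
  constructor
  · rw [hfun]
    exact integrable_finset_sum _ (fun k _ =>
      integrable_finset_sum _ (fun j _ => hterm_int k j))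
  · rw [hfun, integral_finset_sum _ (fun k _ =>
      integrable_finset_sum _ (fun j _ => hterm_int k j))]
    have hval : ∀ k ∈ Finset.range (n+1),
        ∫ x in Ioi (0:ℝ), ∑ j ∈ Finset.range (k+1), (c k j : ℂ) * ((x:ℂ)^(s-1) • g j x)
        = ∑ j ∈ Finset.range (k+1),
            ((c k j : ℂ) * 2^j * (-1)^j * ffC (-σ) j) *
              ((1/2) * (π:ℂ)^(-s/2) * Complex.Gamma σ) := by
      intro k _
      rw [integral_finset_sum _ (fun j _ => hterm_int k j)]
      refine Finset.sum_congr rfl fun j _ => ?_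
      rw [MeasureTheory.integral_const_mul]
      have h1 : (c k j : ℂ) * mellin (g j) s
          = (c k j : ℂ) * (2^j * ((1/2) * (π:ℂ)^(-s/2) * Complex.Gamma (s/2 + j))) :=
        congrArg _ (hasMellin_gauss j hs).2
      rw [show (∫ x in Ioi (0:ℝ), (x:ℂ)^(s-1) • g j x) = mellin (g j) s from rfl, h1,
        ← hσdef, Gamma_add_nat hσ j, ffC_neg_prod]
      ring
    rw [Finset.sum_congr rfl hval]
    have hpull : ∑ k ∈ Finset.range (n+1), ∑ j ∈ Finset.range (k+1),
        ((c k j : ℂ) * 2^j * (-1)^j * ffC (-σ) j) *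
          ((1/2) * (π:ℂ)^(-s/2) * Complex.Gamma σ)
        = (∑ k ∈ Finset.range (n+1), ∑ j ∈ Finset.range (k+1),
            (c k j : ℂ) * 2^j * (-1)^j * ffC (-σ) j) *
          ((1/2) * (π:ℂ)^(-s/2) * Complex.Gamma σ) := by
      rw [Finset.sum_mul]
      exact Finset.sum_congr rfl fun k _ => (Finset.sum_mul _ _ _).symm
    rw [hpull]
    have hkey2 : ∑ k ∈ Finset.range (n+1), ∑ j ∈ Finset.range (k+1),
        (c k j : ℂ) * 2^j * (-1)^j * ffC (-σ) j = qpoly p ps n σ := by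
      rw [qpoly_eq p ps n σ, ← key n (p:ℂ) (ps:ℂ) σ]
      refine Finset.sum_congr rfl fun k hk => ?_
      rw [Finset.mul_sum]
      refine Finset.sum_congr rfl fun j hj => ?_
      rw [Finset.mem_range] at hk hj
      have hjk : j ≤ k := by omega
      have hsq : ((-1:ℂ))^j * (-1:ℂ)^j = 1 := by
        rw [← pow_add]; exact Even.neg_one_pow ⟨j, rfl⟩
      have hkf : (k.factorial : ℂ) = (k.choose j : ℂ) * (j.factorial : ℂ) *
          ((k-j).factorial : ℂ) := by
        rw [← Nat.choose_mul_factorial_mul_factorial hjk]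
        push_cast
        ring
      have hjne : ((j.factorial : ℂ)) ≠ 0 := by
        exact_mod_cast Nat.cast_ne_zero.mpr (Nat.factorial_ne_zero j)
      have hkjne : (((k-j).factorial : ℂ)) ≠ 0 := by
        exact_mod_cast Nat.cast_ne_zero.mpr (Nat.factorial_ne_zero (k-j))
      have harg : (((k:ℝ) + (-p - 1) : ℝ) : ℂ) = (k:ℂ) - (p:ℂ) - 1 := by
        push_cast; ring
      rw [hc]
      push_cast [fallingFac_cast, genBinomR_cast, harg, hkf]
      field_simp
      linear_combination ((n.choose k : ℂ) * ffC ((ps:ℝ):ℂ) (n-k) * (k.choose j : ℂ) *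
        ffC ((k:ℂ) - (p:ℂ) - 1) (k-j) * ffC (-σ) j) * hsq
    rw [hkey2]
    ring
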